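/- Let (X,d) be a separable metric space, 1 ≤ p < ∞, and μ ∈ P_p(X). Let Y_1, Y_2, … be i.i.d. X-valued random elements with common distribution μ, and let bar μ_n := (1/n)∑_{i=1}^n δ_{Y_i}. Then, almost surely, Ls_n F_p(bar μ_n) ⊆ F_p(μ) and Ls_n F_p^*(bar μ_n) ⊆ F_p^*(μ); i.e., the strong law of large numbers for Fréchet p-means and restricted Fréchet p-means holds in the Kuratowski upper topology. -/

import Mathlib

open MeasureTheory Filter Topology ProbabilityTheory

/-- `f_p(μ,x) := ∫ d(x,y)^p dμ(y)`. -/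
noncomputable def fp {X : Type*} [MetricSpace X] [MeasurableSpace X]
    (p : ℝ) (μ : Measure X) (x : X) : ℝ :=
  ∫ y, dist x y ^ p ∂μ

/-- Membership in `P_p(X)`. -/
def MemPp {X : Type*} [MetricSpace X] [MeasurableSpace X] (p : ℝ) (μ : Measure X) : Prop :=
  ∀ x : X, Integrable (fun y => dist x y ^ p) μ

/-- Weak convergence of a sequence of Borel measures. -/
def WeakConv {X : Type*} [MetricSpace X] [MeasurableSpace X]
    (μs : ℕ → Measure X) (μ : Measure X) : Prop :=
  ∀ g : BoundedContinuousFunction X ℝ,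
    Tendsto (fun n => ∫ y, g y ∂(μs n)) atTop (𝓝 (∫ y, g y ∂μ))

/-- Convergence in `τ_w^p`. -/
def TauWp {X : Type*} [MetricSpace X] [MeasurableSpace X]
    (p : ℝ) (μs : ℕ → Measure X) (μ : Measure X) : Prop :=
  WeakConv μs μ ∧ ∀ x : X, Tendsto (fun n => fp p (μs n) x) atTop (𝓝 (fp p μ x))

/-- Joint Fréchet p-mean `F_p(μ,C)`. -/
def Fp {X : Type*} [MetricSpace X] [MeasurableSpace X]
    (p : ℝ) (μ : Measure X) (C : Set X) : Set X :=
  {x ∈ C | ∀ x' ∈ C, fp p μ x ≤ fp p μ x'}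

/-- Support of a measure. -/
def msupport {X : Type*} [MetricSpace X] [MeasurableSpace X] (μ : Measure X) : Set X :=
  {x : X | ∀ U : Set X, IsOpen U → x ∈ U → 0 < μ U}

/-- Kuratowski upper limit. -/
def KurLs {X : Type*} [MetricSpace X] (C : ℕ → Set X) : Set X :=
  ⋂ n, closure (⋃ m, ⋃ (_ : n ≤ m), C m)

/-- Kuratowski lower limit. -/
def KurLi {X : Type*} [MetricSpace X] (C : ℕ → Set X) : Set X :=
  {x : X | ∀ ε : ℝ, 0 < ε → ∀ᶠ n in atTop, ∃ y ∈ C n, dist x y < ε}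

/-- One-sided Hausdorff distance `ρ(C,C') = max_{x ∈ C} min_{x' ∈ C'} d(x,x')`. -/
noncomputable def rho {X : Type*} [MetricSpace X] (C C' : Set X) : ℝ :=
  ⨆ x ∈ C, Metric.infDist x C'

/-- Empirical measure of the first `n` samples. -/
noncomputable def empMeasure {X Ω : Type*} [MeasurableSpace X]
    (Y : ℕ → Ω → X) (n : ℕ) (ω : Ω) : Measure X :=
  (n : ENNReal)⁻¹ • ∑ i ∈ Finset.range n, Measure.dirac (Y i ω)

/-- Effros σ-algebra on subsets of `X`. -/
def effros (X : Type*) [TopologicalSpace X] : MeasurableSpace (Set X) :=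
  MeasurableSpace.generateFrom
    {S : Set (Set X) | ∃ U : Set X, IsOpen U ∧ S = {C : Set X | (C ∩ U).Nonempty}}

/-- The relation `x ⇝_μ x'`. -/
def LeadsTo {X : Type*} [MetricSpace X] [MeasurableSpace X] (μ : Measure X) (x x' : X) : Prop :=
  ∃ ε₀ > (0 : ℝ), ∀ ε : ℝ, 0 < ε → ε ≤ ε₀ →
    ∃ φ : X → X, Set.MapsTo φ (Metric.ball x ε) (Metric.ball x' ε) ∧
      Measurable ((Metric.ball x ε).restrict φ) ∧
      ∀ z ∈ Metric.ball x ε, ∀ᵐ y ∂μ, dist (φ z) y = dist z y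

/-- The equivalence relation `x ∼_μ x'`. -/
def SimEq {X : Type*} [MetricSpace X] [MeasurableSpace X] (μ : Measure X) (x x' : X) : Prop :=
  LeadsTo μ x x' ∧ LeadsTo μ x' x

/-- The equivalence class `[x]_μ`. -/
def eqClass {X : Type*} [MetricSpace X] [MeasurableSpace X] (μ : Measure X) (x : X) : Set X :=
  {x' : X | SimEq μ x x'}

section FrechetAux

open Metric

variable {X : Type*} [MetricSpace X]

private lemma rpow_abs_sub_le {p : ℝ} (hp : 1 ≤ p) {a b : ℝ} (ha : 0 ≤ a) (hb : 0 ≤ b) :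
    |a ^ p - b ^ p| ≤ p * max a b ^ (p - 1) * |a - b| := by
  have hM : (0:ℝ) ≤ max a b := le_trans ha (le_max_left a b)
  have hbound : ∀ t ∈ Set.Icc (0:ℝ) (max a b),
      ‖p * t ^ (p-1)‖ ≤ p * max a b ^ (p-1) := by
    intro t ht
    have h2 : t ^ (p-1) ≤ max a b ^ (p-1) := Real.rpow_le_rpow ht.1 ht.2 (by linarith)
    have h3 : (0:ℝ) ≤ t ^ (p-1) := Real.rpow_nonneg ht.1 _
    rw [Real.norm_eq_abs, abs_of_nonneg (by nlinarith)]
    exact mul_le_mul_of_nonneg_left h2 (by linarith)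
  have key := (convex_Icc (0:ℝ) (max a b)).norm_image_sub_le_of_norm_hasDerivWithin_le
    (f := fun t : ℝ => t ^ p) (f' := fun t : ℝ => p * t ^ (p-1))
    (fun t _ => (Real.hasDerivAt_rpow_const (Or.inr hp)).hasDerivWithinAt)
    hbound ⟨hb, le_max_right a b⟩ ⟨ha, le_max_left a b⟩
  simpa [Real.norm_eq_abs] using key

end FrechetAux

section FrechetAux2

open Metric MeasureTheory

variable {X : Type*} [MetricSpace X] [MeasurableSpace X]

private lemma fp_nonneg (p : ℝ) (ν : Measure X) (x : X) : 0 ≤ fp p ν x :=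
  integral_nonneg fun y => Real.rpow_nonneg dist_nonneg p

private lemma fp_diff_le {p : ℝ} (hp : 1 ≤ p) {ν : Measure X} (hprob : IsProbabilityMeasure ν)
    (hν : MemPp p ν) {x x' : X} (hd : dist x x' ≤ 1) :
    |fp p ν x - fp p ν x'| ≤ p * dist x x' * 2 ^ p * (fp p ν x' + 1) := by
  have hint := hν x
  have hint' := hν x'
  have hb : Integrable (fun y => p * dist x x' * 2 ^ p * (dist x' y ^ p + 1)) ν :=
    (hint'.add (integrable_const 1)).const_mul _
  have hpt : ∀ y, |dist x y ^ p - dist x' y ^ p|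
      ≤ p * dist x x' * 2 ^ p * (dist x' y ^ p + 1) := by
    intro y
    have h1 := rpow_abs_sub_le hp (dist_nonneg : 0 ≤ dist x y) (dist_nonneg : 0 ≤ dist x' y)
    have h2 : |dist x y - dist x' y| ≤ dist x x' := abs_dist_sub_le x x' y
    have hM : max (dist x y) (dist x' y) ≤ dist x' y + 1 := by
      refine max_le ?_ (by linarith)
      have := dist_triangle x x' y
      linarith
    have hd1 : (0:ℝ) ≤ dist x' y := dist_nonneg
    have hMp : max (dist x y) (dist x' y) ^ (p-1) ≤ (dist x' y + 1) ^ p := by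
      calc max (dist x y) (dist x' y) ^ (p-1) ≤ (dist x' y + 1) ^ (p-1) :=
            Real.rpow_le_rpow (le_trans dist_nonneg (le_max_left _ _)) hM (by linarith)
        _ ≤ (dist x' y + 1) ^ p :=
            Real.rpow_le_rpow_of_exponent_le (by linarith) (by linarith)
    have h4 : (dist x' y + 1 : ℝ) ^ p ≤ 2 ^ p * (dist x' y ^ p + 1) := by
      have h5 : (dist x' y + 1 : ℝ) ≤ 2 * max (dist x' y) 1 := by
        rcases le_total (dist x' y) 1 with h | h
        · rw [max_eq_right h]; linarith
        · rw [max_eq_left h]; linarith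
      calc (dist x' y + 1 : ℝ) ^ p ≤ (2 * max (dist x' y) 1) ^ p :=
            Real.rpow_le_rpow (by linarith) h5 (by linarith)
        _ = 2 ^ p * max (dist x' y) 1 ^ p :=
            Real.mul_rpow (by norm_num) (le_trans zero_le_one (le_max_right _ _))
        _ ≤ 2 ^ p * (dist x' y ^ p + 1) := by
            have h2p : (0:ℝ) ≤ 2 ^ p := Real.rpow_nonneg (by norm_num) p
            refine mul_le_mul_of_nonneg_left ?_ h2p
            rcases le_total (dist x' y) 1 with h | h
            · rw [max_eq_right h, Real.one_rpow]
              have := Real.rpow_nonneg hd1 p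
              linarith
            · rw [max_eq_left h]; linarith
    have hMp2 : max (dist x y) (dist x' y) ^ (p-1) ≤ 2 ^ p * (dist x' y ^ p + 1) :=
      le_trans hMp h4
    have hmaxnn : (0:ℝ) ≤ max (dist x y) (dist x' y) ^ (p-1) :=
      Real.rpow_nonneg (le_trans dist_nonneg (le_max_left _ _)) _
    calc |dist x y ^ p - dist x' y ^ p|
        ≤ p * max (dist x y) (dist x' y) ^ (p-1) * |dist x y - dist x' y| := h1
      _ ≤ p * (2 ^ p * (dist x' y ^ p + 1)) * dist x x' := by
          have hp0 : (0:ℝ) ≤ p := by linarith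
          apply mul_le_mul
          · exact mul_le_mul_of_nonneg_left hMp2 hp0
          · exact h2
          · exact abs_nonneg _
          · positivity
      _ = p * dist x x' * 2 ^ p * (dist x' y ^ p + 1) := by ring
  have hfp : fp p ν x - fp p ν x' = ∫ y, (dist x y ^ p - dist x' y ^ p) ∂ν := by
    rw [integral_sub hint hint']; rfl
  calc |fp p ν x - fp p ν x'|
      = |∫ y, (dist x y ^ p - dist x' y ^ p) ∂ν| := by rw [hfp]
    _ ≤ ∫ y, |dist x y ^ p - dist x' y ^ p| ∂ν := by
        simpa [Real.norm_eq_abs] using norm_integral_le_integral_norm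
          (fun y => dist x y ^ p - dist x' y ^ p) (μ := ν)
    _ ≤ ∫ y, p * dist x x' * 2 ^ p * (dist x' y ^ p + 1) ∂ν :=
        integral_mono (hint.sub hint').abs hb (fun y => hpt y)
    _ = p * dist x x' * 2 ^ p * (fp p ν x' + 1) := by
        rw [MeasureTheory.integral_const_mul, integral_add hint' (integrable_const 1), integral_const]
        simp [fp]

end FrechetAux2

section FrechetAux3

open Metric MeasureTheory Filter Topology

variable {X : Type*} [MetricSpace X] [MeasurableSpace X]

private lemma isClosed_msupport (μ : Measure X) : IsClosed (msupport μ) := by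
  rw [← isOpen_compl_iff, isOpen_iff_mem_nhds]
  intro x hx
  simp only [msupport, Set.mem_compl_iff, Set.mem_setOf_eq] at hx
  push_neg at hx
  obtain ⟨U, hU, hxU, hμU⟩ := hx
  refine Filter.mem_of_superset (hU.mem_nhds hxU) ?_
  intro z hz
  simp only [Set.mem_compl_iff, msupport, Set.mem_setOf_eq]
  push_neg
  exact ⟨U, hU, hz, hμU⟩

private lemma tendsto_fp_aux {p : ℝ} (hp : 1 ≤ p) {ν : ℕ → Measure X} {μ : Measure X}
    (hνprob : ∀ n, IsProbabilityMeasure (ν n)) (hμprob : IsProbabilityMeasure μ)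
    (hνPp : ∀ n, MemPp p (ν n)) (hμPp : MemPp p μ)
    {D : Set X} (hD : Dense D)
    (hconv : ∀ q ∈ D, Tendsto (fun n => fp p (ν n) q) atTop (𝓝 (fp p μ q)))
    {x : X} {xs : ℕ → X} (hxs : Tendsto xs atTop (𝓝 x))
    {m : ℕ → ℕ} (hm : Tendsto m atTop atTop) :
    Tendsto (fun k => fp p (ν (m k)) (xs k)) atTop (𝓝 (fp p μ x)) := by
  have hp0 : (0:ℝ) < p := lt_of_lt_of_le one_pos hp
  have h2p : (0:ℝ) < 2 ^ p := Real.rpow_pos_of_pos two_pos p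
  have hfx : 0 ≤ fp p μ x := fp_nonneg p μ x
  set B : ℝ := fp p μ x + p * 2 ^ p * (fp p μ x + 1) with hB
  have hBx : fp p μ x ≤ B := by
    have : (0:ℝ) ≤ p * 2 ^ p * (fp p μ x + 1) := by positivity
    linarith
  have hB0 : (0:ℝ) ≤ B := le_trans hfx hBx
  set K : ℝ := p * 2 ^ p * (B + 3) with hK
  have hK0 : (0:ℝ) < K := by positivity
  rw [Metric.tendsto_atTop]
  intro ε hε
  set δ : ℝ := min 2⁻¹ (ε / (6 * K)) with hδ
  have hδ0 : 0 < δ := lt_min (by norm_num) (div_pos hε (by linarith))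
  have hδ1 : δ ≤ 2⁻¹ := min_le_left _ _
  have hδ2 : δ ≤ ε / (6 * K) := min_le_right _ _
  obtain ⟨q, hqD, hqx⟩ := hD.exists_dist_lt x hδ0
  -- hqx : dist x q < δ
  have hdqx : dist q x ≤ 1 := by rw [dist_comm]; linarith [hqx]
  have h1 : |fp p μ q - fp p μ x| ≤ p * dist q x * 2 ^ p * (fp p μ x + 1) :=
    fp_diff_le hp hμprob hμPp hdqx
  have h1' : |fp p μ q - fp p μ x| ≤ K * δ := by
    have hstep : p * dist q x * 2 ^ p * (fp p μ x + 1) ≤ p * δ * 2 ^ p * (B + 3) := by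
      have hd : dist q x ≤ δ := by rw [dist_comm]; exact hqx.le
      have hfb : fp p μ x + 1 ≤ B + 3 := by linarith
      have := mul_le_mul (mul_le_mul (mul_le_mul_of_nonneg_left hd hp0.le) le_rfl h2p.le
        (by positivity)) hfb (by linarith) (by positivity)
      linarith [this]
    calc |fp p μ q - fp p μ x| ≤ p * dist q x * 2 ^ p * (fp p μ x + 1) := h1
      _ ≤ p * δ * 2 ^ p * (B + 3) := hstep
      _ = K * δ := by ring
  have hKδ : K * δ ≤ ε / 6 := by
    calc K * δ ≤ K * (ε / (6 * K)) := mul_le_mul_of_nonneg_left hδ2 hK0.le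
      _ = ε / 6 := by field_simp
  have hqB : fp p μ q ≤ B := by
    have h1a := (abs_le.mp h1).2
    have hd : p * dist q x * 2 ^ p * (fp p μ x + 1) ≤ p * 2 ^ p * (fp p μ x + 1) := by
      have : p * dist q x ≤ p * 1 := mul_le_mul_of_nonneg_left hdqx hp0.le
      nlinarith [hfx]
    nlinarith
  have hE1 : ∀ᶠ n in atTop, |fp p (ν n) q - fp p μ q| < min 1 (ε / 6) := by
    have h := Metric.tendsto_atTop.mp (hconv q hqD) (min 1 (ε / 6)) (by positivity)
    obtain ⟨N, hN⟩ := h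
    rw [eventually_atTop]
    exact ⟨N, fun n hn => by simpa [Real.dist_eq] using hN n hn⟩
  have hE1' : ∀ᶠ k in atTop, |fp p (ν (m k)) q - fp p μ q| < min 1 (ε / 6) := hm.eventually hE1
  have hE2 : ∀ᶠ k in atTop, dist (xs k) x < δ := by
    have h := Metric.tendsto_atTop.mp hxs δ hδ0
    obtain ⟨N, hN⟩ := h
    rw [eventually_atTop]
    exact ⟨N, hN⟩
  rw [eventually_atTop] at hE1' hE2
  obtain ⟨N1, hN1⟩ := hE1'
  obtain ⟨N2, hN2⟩ := hE2
  refine ⟨max N1 N2, fun k hk => ?_⟩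
  have hk1 := hN1 k (le_trans (le_max_left _ _) hk)
  have hk2 := hN2 k (le_trans (le_max_right _ _) hk)
  have hxq : dist (xs k) q ≤ 2 * δ := by
    calc dist (xs k) q ≤ dist (xs k) x + dist x q := dist_triangle _ _ _
      _ ≤ 2 * δ := by linarith [hqx]
  have hxq1 : dist (xs k) q ≤ 1 := by
    have : (2:ℝ) * δ ≤ 1 := by linarith [hδ1]
    linarith
  have hνq : fp p (ν (m k)) q ≤ B + 1 := by
    have := (abs_lt.mp hk1).2
    have hmin : min 1 (ε/6) ≤ 1 := min_le_left _ _
    linarith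
  have h3 : |fp p (ν (m k)) (xs k) - fp p (ν (m k)) q|
      ≤ p * dist (xs k) q * 2 ^ p * (fp p (ν (m k)) q + 1) :=
    fp_diff_le hp (hνprob _) (hνPp _) hxq1
  have h3' : |fp p (ν (m k)) (xs k) - fp p (ν (m k)) q| ≤ 2 * δ * K := by
    have hfnn : 0 ≤ fp p (ν (m k)) q := fp_nonneg _ _ _
    have hstep : p * dist (xs k) q * 2 ^ p * (fp p (ν (m k)) q + 1)
        ≤ p * (2 * δ) * 2 ^ p * (B + 3) := by
      have hfb : fp p (ν (m k)) q + 1 ≤ B + 3 := by linarith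
      have := mul_le_mul (mul_le_mul (mul_le_mul_of_nonneg_left hxq hp0.le) le_rfl h2p.le
        (by positivity)) hfb (by linarith) (by positivity)
      linarith [this]
    calc |fp p (ν (m k)) (xs k) - fp p (ν (m k)) q|
        ≤ p * dist (xs k) q * 2 ^ p * (fp p (ν (m k)) q + 1) := h3
      _ ≤ p * (2 * δ) * 2 ^ p * (B + 3) := hstep
      _ = 2 * δ * K := by ring
  have h2δK : 2 * δ * K ≤ ε / 3 := by
    have : δ * K ≤ ε / 6 := by
      calc δ * K = K * δ := by ring
        _ ≤ ε / 6 := hKδ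
    linarith
  have htri : |fp p (ν (m k)) (xs k) - fp p μ x|
      ≤ |fp p (ν (m k)) (xs k) - fp p (ν (m k)) q| + |fp p (ν (m k)) q - fp p μ q|
        + |fp p μ q - fp p μ x| := by
    have := abs_sub_le (fp p (ν (m k)) (xs k)) (fp p (ν (m k)) q) (fp p μ x)
    have := abs_sub_le (fp p (ν (m k)) q) (fp p μ q) (fp p μ x)
    calc |fp p (ν (m k)) (xs k) - fp p μ x|
        ≤ |fp p (ν (m k)) (xs k) - fp p (ν (m k)) q| + |fp p (ν (m k)) q - fp p μ x| :=
          abs_sub_le _ _ _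
      _ ≤ _ := by linarith [abs_sub_le (fp p (ν (m k)) q) (fp p μ q) (fp p μ x)]
  rw [Real.dist_eq]
  have hmin2 : min 1 (ε/6) ≤ ε/6 := min_le_right _ _
  calc |fp p (ν (m k)) (xs k) - fp p μ x| ≤ _ := htri
    _ < ε / 3 + ε / 6 + ε / 6 := by
        have := hk1
        have h3'' := h3'
        have := h1'
        linarith [lt_of_lt_of_le (abs_lt.mp hk1).2 le_rfl]
    _ < ε := by linarith

private lemma kurLs_extract {C : ℕ → Set X} {x : X} (hx : x ∈ KurLs C) :
    ∃ m : ℕ → ℕ, ∃ y : ℕ → X, Tendsto m atTop atTop ∧ (∀ k, y k ∈ C (m k)) ∧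
      Tendsto y atTop (𝓝 x) := by
  simp only [KurLs, Set.mem_iInter] at hx
  have h : ∀ k : ℕ, ∃ mk : ℕ, ∃ yk : X, k ≤ mk ∧ yk ∈ C mk ∧ dist x yk < 1/((k:ℝ)+1) := by
    intro k
    have hx' := hx k
    rw [Metric.mem_closure_iff] at hx'
    obtain ⟨y, hy, hdy⟩ := hx' (1/((k:ℝ)+1)) (by positivity)
    simp only [Set.mem_iUnion] at hy
    obtain ⟨mk, hk, hyC⟩ := hy
    exact ⟨mk, y, hk, hyC, hdy⟩
  choose m y h1 h2 h3 using h
  refine ⟨m, y, tendsto_atTop_mono h1 tendsto_id, h2, ?_⟩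
  rw [tendsto_iff_dist_tendsto_zero]
  exact squeeze_zero (fun k => dist_nonneg)
    (fun k => by rw [dist_comm]; exact (h3 k).le)
    tendsto_one_div_add_atTop_nhds_zero_nat

end FrechetAux3

section FrechetAux4

open Metric MeasureTheory Filter Topology

variable {X : Type*} [MetricSpace X] [MeasurableSpace X]

private lemma det_main {p : ℝ} (hp : 1 ≤ p) {ν : ℕ → Measure X} {μ : Measure X}
    (hνprob : ∀ n, IsProbabilityMeasure (ν n)) (hμprob : IsProbabilityMeasure μ)
    (hνPp : ∀ n, MemPp p (ν n)) (hμPp : MemPp p μ)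
    {D : Set X} (hD : Dense D)
    (hconv : ∀ q ∈ D, Tendsto (fun n => fp p (ν n) q) atTop (𝓝 (fp p μ q)))
    (hsupp : ∀ n, msupport (ν n) ⊆ msupport μ)
    (happrox : ∀ x' ∈ msupport μ, ∀ ε : ℝ, 0 < ε →
      ∀ᶠ n in atTop, ∃ z ∈ msupport (ν n), dist x' z < ε) :
    KurLs (fun n => Fp p (ν n) Set.univ) ⊆ Fp p μ Set.univ ∧
    KurLs (fun n => Fp p (ν n) (msupport (ν n))) ⊆ Fp p μ (msupport μ) := by
  constructor
  · intro x hx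
    obtain ⟨m, y, hm, hyC, hyx⟩ := kurLs_extract hx
    simp only [Fp, Set.mem_setOf_eq] at hyC ⊢
    refine ⟨Set.mem_univ x, fun x' _ => ?_⟩
    have hlim1 : Tendsto (fun k => fp p (ν (m k)) (y k)) atTop (𝓝 (fp p μ x)) :=
      tendsto_fp_aux hp hνprob hμprob hνPp hμPp hD hconv hyx hm
    have hlim2 : Tendsto (fun k => fp p (ν (m k)) x') atTop (𝓝 (fp p μ x')) :=
      tendsto_fp_aux hp hνprob hμprob hνPp hμPp hD hconv tendsto_const_nhds hm
    exact le_of_tendsto_of_tendsto hlim1 hlim2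
      (Eventually.of_forall fun k => (hyC k).2 x' (Set.mem_univ _))
  · intro x hx
    obtain ⟨m, y, hm, hyC, hyx⟩ := kurLs_extract hx
    simp only [Fp, Set.mem_setOf_eq] at hyC ⊢
    have hymem : ∀ k, y k ∈ msupport (ν (m k)) := fun k => (hyC k).1
    have hxsupp : x ∈ msupport μ :=
      (isClosed_msupport μ).mem_of_tendsto hyx
        (Eventually.of_forall fun k => hsupp _ (hymem k))
    refine ⟨hxsupp, fun x' hx' => ?_⟩
    set S : ℕ → Set X := fun k => msupport (ν (m k)) with hS
    have hinf : Tendsto (fun k => Metric.infDist x' (S k)) atTop (𝓝 0) := by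
      rw [Metric.tendsto_atTop]
      intro ε hε
      have h := hm.eventually (happrox x' hx' ε hε)
      rw [eventually_atTop] at h
      obtain ⟨N, hN⟩ := h
      refine ⟨N, fun k hk => ?_⟩
      obtain ⟨z, hz, hdz⟩ := hN k hk
      have h0 : 0 ≤ Metric.infDist x' (S k) := Metric.infDist_nonneg
      have hle : Metric.infDist x' (S k) ≤ dist x' z := Metric.infDist_le_dist_of_mem hz
      rw [Real.dist_eq, sub_zero, abs_of_nonneg h0]
      linarith
    have hne : ∀ᶠ k in atTop, (S k).Nonempty := by
      refine (hm.eventually (happrox x' hx' 1 one_pos)).mono ?_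
      rintro k ⟨z, hz, -⟩
      exact ⟨z, hz⟩
    classical
    set z : ℕ → X := fun k =>
      if h : ∃ w ∈ S k, dist x' w < Metric.infDist x' (S k) + 1/((k:ℝ)+1) then h.choose
      else x' with hzdef
    have hzb : ∀ k, dist x' (z k) ≤ Metric.infDist x' (S k) + 1/((k:ℝ)+1) := by
      intro k
      by_cases h : ∃ w ∈ S k, dist x' w < Metric.infDist x' (S k) + 1/((k:ℝ)+1)
      · simp only [hzdef, dif_pos h]
        exact h.choose_spec.2.le
      · simp only [hzdef, dif_neg h, dist_self]
        have h0 : 0 ≤ Metric.infDist x' (S k) := Metric.infDist_nonneg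
        have h1 : (0:ℝ) < 1/((k:ℝ)+1) := by positivity
        linarith
    have hzx : Tendsto z atTop (𝓝 x') := by
      rw [tendsto_iff_dist_tendsto_zero]
      have hadd : Tendsto (fun k => Metric.infDist x' (S k) + 1/((k:ℝ)+1)) atTop (𝓝 0) := by
        simpa using hinf.add tendsto_one_div_add_atTop_nhds_zero_nat
      exact squeeze_zero (fun k => dist_nonneg) (fun k => by rw [dist_comm]; exact hzb k) hadd
    have hzmem : ∀ᶠ k in atTop, z k ∈ S k := by
      refine hne.mono fun k hk => ?_
      have h : ∃ w ∈ S k, dist x' w < Metric.infDist x' (S k) + 1/((k:ℝ)+1) := by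
        rw [← Metric.infDist_lt_iff hk]
        have h1 : (0:ℝ) < 1/((k:ℝ)+1) := by positivity
        linarith
      simp only [hzdef, dif_pos h]
      exact h.choose_spec.1
    have hlim1 : Tendsto (fun k => fp p (ν (m k)) (y k)) atTop (𝓝 (fp p μ x)) :=
      tendsto_fp_aux hp hνprob hμprob hνPp hμPp hD hconv hyx hm
    have hlim2 : Tendsto (fun k => fp p (ν (m k)) (z k)) atTop (𝓝 (fp p μ x')) :=
      tendsto_fp_aux hp hνprob hμprob hνPp hμPp hD hconv hzx hm
    exact le_of_tendsto_of_tendsto hlim1 hlim2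
      (hzmem.mono fun k hk => (hyC k).2 (z k) hk)

end FrechetAux4

section FrechetAux5

open Metric MeasureTheory Filter Topology ProbabilityTheory

variable {X : Type*} [MetricSpace X] [MeasurableSpace X] [BorelSpace X]

private lemma emp_apply {Ω : Type*} (Y : ℕ → Ω → X) (n : ℕ) (ω : Ω) {U : Set X}
    (hU : MeasurableSet U) :
    empMeasure Y n ω U
      = (n : ENNReal)⁻¹ * ∑ i ∈ Finset.range n, U.indicator (1 : X → ENNReal) (Y i ω) := by
  simp [empMeasure, Measure.smul_apply, Measure.finset_sum_apply,
    Measure.dirac_apply' _ hU, smul_eq_mul]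

private lemma emp_prob {Ω : Type*} (Y : ℕ → Ω → X) (n : ℕ) (ω : Ω) :
    IsProbabilityMeasure (empMeasure Y (n+1) ω) := by
  constructor
  rw [emp_apply Y (n+1) ω MeasurableSet.univ]
  simp only [Set.indicator_univ, Pi.one_apply, Finset.sum_const, Finset.card_range,
    nsmul_eq_mul, mul_one]
  rw [ENNReal.inv_mul_cancel (by exact_mod_cast Nat.succ_ne_zero n) (ENNReal.natCast_ne_top _)]

private lemma integrable_dirac_cont {f : X → ℝ} (hf : Continuous f) (a : X) :
    Integrable f (Measure.dirac a) := by
  refine ⟨hf.aestronglyMeasurable, ?_⟩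
  have h : ∫⁻ y, ‖f y‖₊ ∂(Measure.dirac a) = ‖f a‖₊ :=
    lintegral_dirac' a hf.measurable.nnnorm.coe_nnreal_ennreal
  simp [HasFiniteIntegral, h]

private lemma cont_distp {p : ℝ} (hp : 1 ≤ p) (x : X) :
    Continuous fun y => dist x y ^ p :=
  Continuous.rpow_const (continuous_const.dist continuous_id)
    (fun _ => Or.inr (le_trans zero_le_one hp))

private lemma memPp_emp {Ω : Type*} {p : ℝ} (hp : 1 ≤ p) (Y : ℕ → Ω → X) (n : ℕ) (ω : Ω) :
    MemPp p (empMeasure Y (n+1) ω) := by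
  intro x
  unfold empMeasure
  rw [integrable_smul_measure (ENNReal.inv_ne_zero.mpr (ENNReal.natCast_ne_top _))
    (ENNReal.inv_ne_top.mpr (by exact_mod_cast Nat.succ_ne_zero n))]
  exact integrable_finset_sum_measure.mpr fun i _ => integrable_dirac_cont (cont_distp hp x) _

private lemma fp_emp {Ω : Type*} {p : ℝ} (hp : 1 ≤ p) (Y : ℕ → Ω → X) (n : ℕ) (ω : Ω) (x : X) :
    fp p (empMeasure Y (n+1) ω) x
      = (∑ i ∈ Finset.range (n+1), dist x (Y i ω) ^ p) / ((n:ℝ)+1) := by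
  unfold fp empMeasure
  rw [integral_smul_measure,
    integral_finset_sum_measure (fun i _ => integrable_dirac_cont (cont_distp hp x) _)]
  have hc : ((n + 1 : ℕ) : ENNReal)⁻¹.toReal = ((n : ℝ) + 1)⁻¹ := by
    rw [ENNReal.toReal_inv, ENNReal.toReal_natCast]
    push_cast
    ring
  simp only [integral_dirac, smul_eq_mul, hc]
  rw [div_eq_inv_mul]

private lemma mem_msupport_emp {Ω : Type*} (Y : ℕ → Ω → X) {n i : ℕ} (hi : i < n) (ω : Ω) :
    Y i ω ∈ msupport (empMeasure Y n ω) := by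
  intro U hU hxU
  rw [emp_apply Y n ω hU.measurableSet]
  have h1 : U.indicator (1 : X → ENNReal) (Y i ω) = 1 := Set.indicator_of_mem hxU 1
  have h2 : (1:ENNReal) ≤ ∑ j ∈ Finset.range n, U.indicator (1 : X → ENNReal) (Y j ω) := by
    rw [← h1]
    exact Finset.single_le_sum (f := fun j => U.indicator (1 : X → ENNReal) (Y j ω)) (fun j _ => zero_le) (Finset.mem_range.mpr hi)
  refine ENNReal.mul_pos (ENNReal.inv_ne_zero.mpr (ENNReal.natCast_ne_top _)) ?_
  exact (lt_of_lt_of_le zero_lt_one h2).ne'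

private lemma msupport_emp_subset {Ω : Type*} (Y : ℕ → Ω → X) (n : ℕ) (ω : Ω) {μ : Measure X}
    (hY : ∀ i, Y i ω ∈ msupport μ) :
    msupport (empMeasure Y n ω) ⊆ msupport μ := by
  intro x hx
  have hcl : x ∈ closure (msupport μ) := by
    rw [_root_.mem_closure_iff]
    intro U hU hxU
    have hpos := hx U hU hxU
    rw [emp_apply Y n ω hU.measurableSet] at hpos
    have hsum : ∑ j ∈ Finset.range n, U.indicator (1 : X → ENNReal) (Y j ω) ≠ 0 := by
      intro h0
      rw [h0, mul_zero] at hpos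
      exact lt_irrefl 0 hpos
    rw [Ne, Finset.sum_eq_zero_iff] at hsum
    push_neg at hsum
    obtain ⟨j, _, hj⟩ := hsum
    have hjU : Y j ω ∈ U := by
      by_contra hc
      exact hj (Set.indicator_of_notMem hc 1)
    exact ⟨Y j ω, hjU, hY j⟩
  rwa [(isClosed_msupport μ).closure_eq] at hcl

private lemma msupport_compl_null [SecondCountableTopology X] (μ : Measure X) :
    μ (msupport μ)ᶜ = 0 := by
  obtain ⟨B, hBc, -, hBb⟩ := TopologicalSpace.exists_countable_basis X
  have hsub : (msupport μ)ᶜ ⊆ ⋃ U ∈ {U ∈ B | μ U = 0}, U := by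
    intro x hx
    simp only [msupport, Set.mem_compl_iff, Set.mem_setOf_eq] at hx
    push_neg at hx
    obtain ⟨U, hU, hxU, hμU⟩ := hx
    have hμU0 : μ U = 0 := le_antisymm hμU zero_le
    obtain ⟨V, hVB, hxV, hVU⟩ := hBb.exists_subset_of_mem_open hxU hU
    exact Set.mem_biUnion ⟨hVB, measure_mono_null hVU hμU0⟩ hxV
  refine measure_mono_null hsub ?_
  rw [measure_biUnion_null_iff (hBc.mono (Set.sep_subset _ _))]
  exact fun U hU => hU.2

end FrechetAux5

section FrechetAux6

open Metric MeasureTheory Filter Topology ProbabilityTheory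

variable {X : Type*} [MetricSpace X] [MeasurableSpace X] [BorelSpace X]

private lemma slln_fp {Ω : Type*} [MeasurableSpace Ω] {P : Measure Ω}
    {p : ℝ} (hp : 1 ≤ p) {μ : Measure X} (hμPp : MemPp p μ)
    (Y : ℕ → Ω → X) (hYmeas : ∀ i, Measurable (Y i))
    (hindep : iIndepFun Y P)
    (hlaw : ∀ i, Measure.map (Y i) P = μ) (q : X) :
    ∀ᵐ ω ∂P, Tendsto (fun n => fp p (empMeasure Y (n+1) ω) q) atTop (𝓝 (fp p μ q)) := by
  have hc : Continuous fun y => dist q y ^ p := cont_distp hp q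
  have hfm : Measurable fun y => dist q y ^ p := hc.measurable
  have hint : Integrable (fun ω => dist q (Y 0 ω) ^ p) P := by
    have h := hμPp q
    rw [← hlaw 0] at h
    exact (integrable_map_measure hc.aestronglyMeasurable (hYmeas 0).aemeasurable).mp h
  have hindep' : Pairwise (Function.onFun (IndepFun · · P) fun i ω => dist q (Y i ω) ^ p) := by
    intro i j hij
    exact (hindep.indepFun hij).comp hfm hfm
  have hident : ∀ i, IdentDistrib (fun ω => dist q (Y i ω) ^ p)
      (fun ω => dist q (Y 0 ω) ^ p) P P := by
    intro i
    have h0 : IdentDistrib (Y i) (Y 0) P P :=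
      ⟨(hYmeas i).aemeasurable, (hYmeas 0).aemeasurable, by rw [hlaw i, hlaw 0]⟩
    exact h0.comp hfm
  have hE : P[fun ω => dist q (Y 0 ω) ^ p] = fp p μ q := by
    rw [fp, ← hlaw 0, integral_map (hYmeas 0).aemeasurable hc.aestronglyMeasurable]
  have h := strong_law_ae_real (fun i ω => dist q (Y i ω) ^ p) hint hindep' hident
  filter_upwards [h] with ω hω
  rw [hE] at hω
  have h2 := hω.comp (tendsto_add_atTop_nat 1)
  refine h2.congr fun n => ?_
  simp only [Function.comp_apply]
  rw [fp_emp hp Y n ω q]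
  push_cast
  ring

private lemma exists_hit {Ω : Type*} [MeasurableSpace Ω] {P : Measure Ω}
    (hPprob : IsProbabilityMeasure P)
    {μ : Measure X} (hμprob : IsProbabilityMeasure μ)
    (Y : ℕ → Ω → X) (hYmeas : ∀ i, Measurable (Y i))
    (hindep : iIndepFun Y P)
    (hlaw : ∀ i, Measure.map (Y i) P = μ) {B : Set X} (hB : MeasurableSet B)
    (hBpos : 0 < μ B) :
    ∀ᵐ ω ∂P, ∃ i, Y i ω ∈ B := by
  have hkey : ∀ n : ℕ, P (⋂ i, (Y i) ⁻¹' Bᶜ) ≤ (μ Bᶜ) ^ n := by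
    intro n
    have h1 : P (⋂ i ∈ Finset.range n, (Y i) ⁻¹' Bᶜ)
        = ∏ i ∈ Finset.range n, P ((Y i) ⁻¹' Bᶜ) :=
      hindep.meas_biInter (fun i _ => ⟨Bᶜ, hB.compl, rfl⟩)
    have h2 : ∀ i, P ((Y i) ⁻¹' Bᶜ) = μ Bᶜ := fun i => by
      rw [← hlaw i, Measure.map_apply (hYmeas i) hB.compl]
    calc P (⋂ i, Y i ⁻¹' Bᶜ) ≤ P (⋂ i ∈ Finset.range n, Y i ⁻¹' Bᶜ) := by
          refine measure_mono ?_
          intro ω hω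
          simp only [Set.mem_iInter] at hω ⊢
          exact fun i _ => hω i
      _ = ∏ i ∈ Finset.range n, P (Y i ⁻¹' Bᶜ) := h1
      _ = (μ Bᶜ) ^ n := by
          rw [Finset.prod_congr rfl fun i _ => h2 i, Finset.prod_const, Finset.card_range]
  have hlt : μ Bᶜ < 1 := by
    rw [measure_compl hB (measure_ne_top μ B), measure_univ]
    exact ENNReal.sub_lt_self ENNReal.one_ne_top one_ne_zero hBpos.ne'
  have h0 : P (⋂ i, Y i ⁻¹' Bᶜ) = 0 := by
    refine le_antisymm ?_ zero_le
    exact ge_of_tendsto' (ENNReal.tendsto_pow_atTop_nhds_zero_of_lt_one hlt) hkey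
  have hset : {ω | ¬ ∃ i, Y i ω ∈ B} = ⋂ i, Y i ⁻¹' Bᶜ := by
    ext ω
    simp [Set.mem_iInter]
  rw [ae_iff, hset]
  exact h0

end FrechetAux6

theorem frechet_stmt14 {X : Type*} [MetricSpace X] [TopologicalSpace.SeparableSpace X]
    [MeasurableSpace X] [BorelSpace X]
    (p : ℝ) (hp : 1 ≤ p)
    (μ : Measure X) (hμprob : IsProbabilityMeasure μ) (hμPp : MemPp p μ)
    {Ω : Type*} [MeasurableSpace Ω] (P : Measure Ω) (hPprob : IsProbabilityMeasure P)
    (Y : ℕ → Ω → X) (hYmeas : ∀ i, Measurable (Y i))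
    (hindep : iIndepFun Y P)
    (hlaw : ∀ i, Measure.map (Y i) P = μ) :
    ∀ᵐ ω ∂P,
      KurLs (fun n => Fp p (empMeasure Y (n + 1) ω) Set.univ) ⊆ Fp p μ Set.univ ∧
      KurLs (fun n => Fp p (empMeasure Y (n + 1) ω) (msupport (empMeasure Y (n + 1) ω)))
        ⊆ Fp p μ (msupport μ) := by
  haveI : SecondCountableTopology X := UniformSpace.secondCountable_of_separable X
  obtain ⟨D, hDc, hDd⟩ := TopologicalSpace.exists_countable_dense X
  have hA1 : ∀ᵐ ω ∂P, ∀ q ∈ D,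
      Tendsto (fun n => fp p (empMeasure Y (n+1) ω) q) atTop (𝓝 (fp p μ q)) :=
    (ae_ball_iff hDc).mpr fun q _ => slln_fp hp hμPp Y hYmeas hindep hlaw q
  have hA2 : ∀ᵐ ω ∂P, ∀ i, Y i ω ∈ msupport μ := by
    rw [ae_all_iff]
    intro i
    have hnull : μ (msupport μ)ᶜ = 0 := msupport_compl_null μ
    have hms : MeasurableSet (msupport μ) := (isClosed_msupport μ).measurableSet
    have hmap := Measure.map_apply (μ := P) (hYmeas i) hms.compl
    rw [hlaw i, hnull] at hmap
    rw [ae_iff]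
    have hset : {ω | ¬ Y i ω ∈ msupport μ} = (Y i) ⁻¹' (msupport μ)ᶜ := rfl
    rw [hset, ← hmap]
  have hA3 : ∀ᵐ ω ∂P, ∀ q ∈ D, ∀ j : ℕ, 0 < μ (Metric.ball q (1/((j:ℝ)+1))) →
      ∃ i, Y i ω ∈ Metric.ball q (1/((j:ℝ)+1)) := by
    rw [ae_ball_iff hDc]
    intro q _
    rw [ae_all_iff]
    intro j
    by_cases hpos : 0 < μ (Metric.ball q (1/((j:ℝ)+1)))
    · exact (exists_hit hPprob hμprob Y hYmeas hindep hlaw Metric.isOpen_ball.measurableSet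
        hpos).mono (fun ω h _ => h)
    · exact Filter.Eventually.of_forall fun ω h => absurd h hpos
  filter_upwards [hA1, hA2, hA3] with ω h1 h2 h3
  have hνprob : ∀ n, IsProbabilityMeasure (empMeasure Y (n+1) ω) := fun n => emp_prob Y n ω
  have hνPp : ∀ n, MemPp p (empMeasure Y (n+1) ω) := fun n => memPp_emp hp Y n ω
  have hsupp : ∀ n, msupport (empMeasure Y (n+1) ω) ⊆ msupport μ :=
    fun n => msupport_emp_subset Y (n+1) ω h2
  have happrox : ∀ x' ∈ msupport μ, ∀ ε : ℝ, 0 < ε →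
      ∀ᶠ n in atTop, ∃ z ∈ msupport (empMeasure Y (n+1) ω), dist x' z < ε := by
    intro x' hx' ε hε
    obtain ⟨j, hj⟩ := exists_nat_one_div_lt (show (0:ℝ) < ε/2 by linarith)
    obtain ⟨q, hqD, hq⟩ := hDd.exists_dist_lt x' (show (0:ℝ) < 1/((j:ℝ)+1) by positivity)
    have hx'B : x' ∈ Metric.ball q (1/((j:ℝ)+1)) := by
      rw [Metric.mem_ball]
      exact hq
    have hpos : 0 < μ (Metric.ball q (1/((j:ℝ)+1))) := hx' _ Metric.isOpen_ball hx'B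
    obtain ⟨i, hi⟩ := h3 q hqD j hpos
    rw [eventually_atTop]
    refine ⟨i, fun n hn => ⟨Y i ω, mem_msupport_emp Y (Nat.lt_succ_of_le hn) ω, ?_⟩⟩
    have hiq : dist q (Y i ω) < 1/((j:ℝ)+1) := by
      rw [dist_comm]
      exact Metric.mem_ball.mp hi
    calc dist x' (Y i ω) ≤ dist x' q + dist q (Y i ω) := dist_triangle _ _ _
      _ < 1/((j:ℝ)+1) + 1/((j:ℝ)+1) := add_lt_add hq hiq
      _ < ε := by linarith
  exact det_main hp hνprob hμprob hνPp hμPp hDd h1 hsupp happrox
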